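/- For the Huber contamination model with Dirac contaminations: if D(Q,P)² = E_{X,X'∼Q}[u(X,X')], E_{X∼P}[u(X,·)] = 0, and τ := sup_x u(x,x) < ∞, then sup over ε ∈ [0,ε₀] and z ∈ ℝ^d of D((1−ε)P + ε δ_z, P) equals ε₀ · τ^{1/2} (provided the supremum sup_z u(z,z) = τ is attained in the limit), and in particular D((1−ε)P + εR, P) ≤ ε₀ τ^{1/2} for every probability measure R and ε ≤ ε₀. -/

import Mathlib

open MeasureTheory

/-- Tightness of the KSD bound for Huber's contamination model: with a bounded
positive-definite Stein kernel `u` satisfying `E_P[u(X,·)] = 0` and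
`⨆ z, u(z,z) = τ`, the supremum of `D((1−ε)P + εδ_z, P)` over `ε ∈ [0,ε₀]` and
`z` equals `ε₀ √τ`, and `D((1−ε)P + εR, P) ≤ ε₀ √τ` for every probability
measure `R` and `ε ∈ [0, ε₀]`. -/
theorem stmt5 {X : Type*} [MeasurableSpace X] [Nonempty X]
    (u : X → X → ℝ) (τ : ℝ)
    (hmeas : Measurable (Function.uncurry u))
    (hsymm : ∀ x y, u x y = u y x)
    (hdiag : ∀ x, 0 ≤ u x x)
    (hbound : ∀ x y, |u x y| ≤ Real.sqrt (u x x) * Real.sqrt (u y y))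
    (hble : ∀ x, u x x ≤ τ) (hτ : (⨆ z, u z z) = τ)
    (P : Measure X) [IsProbabilityMeasure P]
    (hzero : ∀ y, ∫ x, u x y ∂P = 0)
    (ε₀ : ℝ) (hε₀ : ε₀ ∈ Set.Icc (0:ℝ) 1)
    (D : Measure X → ℝ)
    (hD : ∀ Q : Measure X, IsProbabilityMeasure Q →
      D Q = Real.sqrt (∫ z : X × X, u z.1 z.2 ∂(Q.prod Q))) :
    (⨆ ε : Set.Icc (0:ℝ) ε₀, ⨆ z : X,
        D (ENNReal.ofReal (1 - (ε : ℝ)) • P + ENNReal.ofReal (ε : ℝ) • Measure.dirac z))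
      = ε₀ * Real.sqrt τ ∧
    ∀ (R : Measure X), IsProbabilityMeasure R → ∀ ε ∈ Set.Icc (0:ℝ) ε₀,
      D (ENNReal.ofReal (1 - ε) • P + ENNReal.ofReal ε • R) ≤ ε₀ * Real.sqrt τ := by
  obtain ⟨x₀⟩ := ‹Nonempty X›
  have hτ0 : 0 ≤ τ := le_trans (hdiag x₀) (hble x₀)
  have hubd : ∀ x y, |u x y| ≤ τ := by
    intro x y
    calc |u x y| ≤ Real.sqrt (u x x) * Real.sqrt (u y y) := hbound x y
    _ ≤ Real.sqrt τ * Real.sqrt τ := by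
        gcongr <;> [exact hble x; exact hble y]
    _ = τ := Real.mul_self_sqrt hτ0
  -- integrability of bounded measurable functions
  have intBdd : ∀ (f : X → ℝ), Measurable f → (∀ x, |f x| ≤ τ) →
      ∀ (μ : Measure X), IsFiniteMeasure μ → Integrable f μ := by
    intro f hf hb μ hμ
    exact (integrable_const τ).mono' hf.aestronglyMeasurable
      (Filter.Eventually.of_forall fun x => by simpa using hb x)
  have hint : ∀ (μ ν : Measure X), IsFiniteMeasure μ → IsFiniteMeasure ν →
      Integrable (fun z : X × X => u z.1 z.2) (μ.prod ν) := by
    intro μ ν hμ hν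
    exact (integrable_const τ).mono' hmeas.aestronglyMeasurable
      (Filter.Eventually.of_forall fun z => by simpa using hubd z.1 z.2)
  have hux : ∀ x : X, Measurable (u x) := fun x =>
    hmeas.comp measurable_prodMk_left
  have huxP : ∀ x, ∫ y, u x y ∂P = 0 := by
    intro x
    rw [integral_congr_ae (Filter.Eventually.of_forall fun y => hsymm x y)]
    exact hzero x
  -- probability of the mixture
  have hprob : ∀ ε : ℝ, 0 ≤ ε → ε ≤ 1 → ∀ R : Measure X, IsProbabilityMeasure R →
      IsProbabilityMeasure (ENNReal.ofReal (1 - ε) • P + ENNReal.ofReal ε • R) := by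
    intro ε h0 h1 R hR
    constructor
    simp only [Measure.add_apply, Measure.smul_apply, smul_eq_mul, measure_univ, mul_one]
    rw [← ENNReal.ofReal_add (by linarith) h0]
    norm_num
  -- the key identity
  have key : ∀ ε : ℝ, 0 ≤ ε → ε ≤ 1 → ∀ R : Measure X, IsProbabilityMeasure R →
      ∫ z : X × X, u z.1 z.2 ∂((ENNReal.ofReal (1 - ε) • P + ENNReal.ofReal ε • R).prod
        (ENNReal.ofReal (1 - ε) • P + ENNReal.ofReal ε • R))
      = ε ^ 2 * ∫ z : X × X, u z.1 z.2 ∂(R.prod R) := by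
    intro ε h0 h1 R hR
    set Q : Measure X := ENNReal.ofReal (1 - ε) • P + ENNReal.ofReal ε • R with hQ
    haveI hQP : IsProbabilityMeasure Q := hprob ε h0 h1 R hR
    have hQint : ∀ f : X → ℝ, Measurable f → (∀ x, |f x| ≤ τ) →
        ∫ x, f x ∂Q = (1 - ε) * ∫ x, f x ∂P + ε * ∫ x, f x ∂ R := by
      intro f hf hb
      rw [hQ, integral_add_measure
        ((intBdd f hf hb P inferInstance).smul_measure ENNReal.ofReal_ne_top)
        ((intBdd f hf hb R inferInstance).smul_measure ENNReal.ofReal_ne_top),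
        integral_smul_measure, integral_smul_measure,
        ENNReal.toReal_ofReal (by linarith), ENNReal.toReal_ofReal h0]
      simp [smul_eq_mul]
    have hg : Measurable fun x => ∫ y, u x y ∂ R :=
      (hmeas.stronglyMeasurable.integral_prod_right').measurable
    have hgb : ∀ x, |∫ y, u x y ∂ R| ≤ τ := by
      intro x
      calc |∫ y, u x y ∂ R| = ‖∫ y, u x y ∂ R‖ := (Real.norm_eq_abs _).symm
      _ ≤ ∫ y, ‖u x y‖ ∂ R := norm_integral_le_integral_norm _
      _ = ∫ y, |u x y| ∂ R := by simp [Real.norm_eq_abs]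
      _ ≤ ∫ y, τ ∂ R := integral_mono (intBdd (u x) (hux x) (hubd x) R inferInstance).abs
          (integrable_const τ) (fun y => hubd x y)
      _ = τ := by simp
    have hgP : ∫ x, (∫ y, u x y ∂ R) ∂P = 0 := by
      rw [← integral_prod _ (hint P R inferInstance inferInstance),
        integral_prod_symm _ (hint P R inferInstance inferInstance)]
      simp [hzero]
    rw [integral_prod _ (hint Q Q inferInstance inferInstance)]
    have inner : ∀ x, ∫ y, u x y ∂Q = ε * ∫ y, u x y ∂ R := by
      intro x
      rw [hQint (u x) (hux x) (hubd x), huxP x]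
      ring
    simp only [inner]
    rw [integral_const_mul, hQint _ (hg) hgb, hgP,
      ← integral_prod _ (hint R R inferInstance inferInstance)]
    ring
  have hIRR_le : ∀ R : Measure X, IsProbabilityMeasure R →
      ∫ z : X × X, u z.1 z.2 ∂(R.prod R) ≤ τ := by
    intro R hR
    have h1 : ∫ z : X × X, u z.1 z.2 ∂(R.prod R) ≤ ∫ z : X × X, τ ∂(R.prod R) :=
      integral_mono (hint R R inferInstance inferInstance) (integrable_const τ)
        (fun z => (abs_le.mp (hubd z.1 z.2)).2)
    simpa using h1
  -- the bound
  have bound : ∀ (R : Measure X), IsProbabilityMeasure R → ∀ ε ∈ Set.Icc (0:ℝ) ε₀,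
      D (ENNReal.ofReal (1 - ε) • P + ENNReal.ofReal ε • R) ≤ ε₀ * Real.sqrt τ := by
    intro R hR ε hε
    have hε1 : ε ≤ 1 := hε.2.trans hε₀.2
    rw [hD _ (hprob ε hε.1 hε1 R hR), key ε hε.1 hε1 R hR]
    calc Real.sqrt (ε ^ 2 * ∫ z : X × X, u z.1 z.2 ∂(R.prod R))
        ≤ Real.sqrt (ε₀ ^ 2 * τ) := by
          apply Real.sqrt_le_sqrt
          have h2 : ε ^ 2 ≤ ε₀ ^ 2 := by nlinarith [hε.1, hε.2]
          have h3 := mul_le_mul_of_nonneg_left (hIRR_le R hR) (sq_nonneg ε)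
          have h4 := mul_le_mul_of_nonneg_right h2 hτ0
          linarith
    _ = ε₀ * Real.sqrt τ := by
          rw [Real.sqrt_mul (sq_nonneg ε₀), Real.sqrt_sq hε₀.1]
  refine ⟨?_, bound⟩
  -- value at Dirac contaminations
  have hdval : ∀ (ε : ℝ), 0 ≤ ε → ε ≤ 1 → ∀ z : X,
      D (ENNReal.ofReal (1 - ε) • P + ENNReal.ofReal ε • Measure.dirac z)
        = ε * Real.sqrt (u z z) := by
    intro ε h0 h1 z
    rw [hD _ (hprob ε h0 h1 _ inferInstance), key ε h0 h1 _ inferInstance]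
    have : ∫ p : X × X, u p.1 p.2 ∂((Measure.dirac z).prod (Measure.dirac z)) = u z z := by
      rw [Measure.dirac_prod_dirac]
      exact integral_dirac' _ _ hmeas.stronglyMeasurable
    rw [this, Real.sqrt_mul (sq_nonneg ε), Real.sqrt_sq h0]
  -- sup of sqrt(u z z) equals sqrt τ
  have hS : (⨆ z : X, Real.sqrt (u z z)) = Real.sqrt τ := by
    have hbdd : BddAbove (Set.range fun z : X => Real.sqrt (u z z)) := by
      refine ⟨Real.sqrt τ, ?_⟩
      rintro y ⟨z, rfl⟩
      exact Real.sqrt_le_sqrt (hble z)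
    refine le_antisymm (ciSup_le fun z => Real.sqrt_le_sqrt (hble z)) ?_
    set S := ⨆ z : X, Real.sqrt (u z z) with hSdef
    have hS0 : 0 ≤ S := le_trans (Real.sqrt_nonneg (u x₀ x₀)) (le_ciSup hbdd x₀)
    have hτS : τ ≤ S ^ 2 := by
      rw [← hτ]
      refine ciSup_le fun z => ?_
      have h1 := le_ciSup hbdd z
      nlinarith [Real.sq_sqrt (hdiag z), Real.sqrt_nonneg (u z z)]
    calc Real.sqrt τ ≤ Real.sqrt (S ^ 2) := Real.sqrt_le_sqrt hτS
    _ = S := by rw [Real.sqrt_sq hS0]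
  have hne : Nonempty (Set.Icc (0:ℝ) ε₀) := ⟨⟨0, le_refl 0, hε₀.1⟩⟩
  -- termwise bound for the double sup
  have htb : ∀ (ε : Set.Icc (0:ℝ) ε₀) (z : X),
      D (ENNReal.ofReal (1 - (ε : ℝ)) • P + ENNReal.ofReal (ε : ℝ) • Measure.dirac z)
        ≤ ε₀ * Real.sqrt τ := fun ε z => bound _ inferInstance ε ε.2
  have hiBdd : ∀ (ε : Set.Icc (0:ℝ) ε₀), BddAbove (Set.range fun z : X =>
      D (ENNReal.ofReal (1 - (ε : ℝ)) • P + ENNReal.ofReal (ε : ℝ) • Measure.dirac z)) := by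
    intro ε
    exact ⟨ε₀ * Real.sqrt τ, by rintro y ⟨z, rfl⟩; exact htb ε z⟩
  refine le_antisymm (ciSup_le fun ε => ciSup_le fun z => htb ε z) ?_
  have hε₀mem : (ε₀ : ℝ) ∈ Set.Icc (0:ℝ) ε₀ := ⟨hε₀.1, le_refl ε₀⟩
  have step1 : ε₀ * Real.sqrt τ = ⨆ z : X, ε₀ * Real.sqrt (u z z) := by
    rw [← hS, Real.mul_iSup_of_nonneg hε₀.1]
  rw [step1]
  refine ciSup_le fun z => ?_
  have h1 : ε₀ * Real.sqrt (u z z)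
      = D (ENNReal.ofReal (1 - ((⟨ε₀, hε₀mem⟩ : Set.Icc (0:ℝ) ε₀) : ℝ)) • P
          + ENNReal.ofReal ((⟨ε₀, hε₀mem⟩ : Set.Icc (0:ℝ) ε₀) : ℝ) • Measure.dirac z) :=
    (hdval ε₀ hε₀.1 hε₀.2 z).symm
  rw [h1]
  have h2 := le_ciSup (hiBdd ⟨ε₀, hε₀mem⟩) z
  refine h2.trans ?_
  refine le_ciSup (f := fun ε : Set.Icc (0:ℝ) ε₀ => ⨆ z : X,
      D (ENNReal.ofReal (1 - (ε : ℝ)) • P + ENNReal.ofReal (ε : ℝ) • Measure.dirac z)) ?_ ⟨ε₀, hε₀mem⟩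
  exact ⟨ε₀ * Real.sqrt τ, by rintro y ⟨ε, rfl⟩; exact ciSup_le fun z => htb ε z⟩
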